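/- Let I = ⟨y_1 + ... + y_n, y_1^2, ..., y_n^2⟩ in R = k[y_1,...,y_n], char(k) = 0. Then every element of R/I of degree strictly greater than ⌊n/2⌋ is zero; i.e., the graded quotient R/I vanishes in degrees above ⌊n/2⌋. -/

import Mathlib

open MvPolynomial

namespace Stmt12Aux

variable {F : Type*} [Field F] [CharZero F]

/-- coefficients of the explicit preimage -/
noncomputable def c (d j : ℕ) : F := (-1 : F)^(d-1-j) * ((d : F) * ((d-1).choose j : F))⁻¹

lemma arith (d j : ℕ) (hj1 : 1 ≤ j) (hjd : j ≤ d) :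
    (j : F) * c d (j-1) + ((d - j : ℕ) : F) * c d j = if j = d then 1 else 0 := by
  have hd0 : (d : F) ≠ 0 := by
    have : 0 < d := lt_of_lt_of_le hj1 hjd
    exact_mod_cast this.ne'
  rcases eq_or_lt_of_le hjd with rfl | hlt
  · simp only [if_pos rfl, Nat.sub_self, Nat.cast_zero, zero_mul, add_zero, c,
      Nat.choose_self, Nat.cast_one, pow_zero, one_mul, mul_one]
    field_simp
    simp
  · rw [if_neg hlt.ne]
    have hj : j - 1 + 1 = j := Nat.succ_pred_eq_of_pos hj1
    have hjd1 : j ≤ d - 1 := Nat.le_sub_one_of_lt hlt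
    have hch1 : ((d-1).choose (j-1) : F) ≠ 0 := by
      exact_mod_cast (Nat.choose_pos (le_trans (Nat.sub_le _ _) hjd1)).ne'
    have hch2 : ((d-1).choose j : F) ≠ 0 := by
      exact_mod_cast (Nat.choose_pos hjd1).ne'
    have hsign : (d - 1 - (j-1)) = (d - 1 - j) + 1 := by omega
    have hnat : (d-1).choose j * j = (d-1).choose (j-1) * (d - j) := by
      have := Nat.choose_succ_right_eq (d-1) (j-1)
      rw [hj] at this
      rw [this]
      congr 1
      omega
    have hnatF : ((d-1).choose j : F) * (j : F) = ((d-1).choose (j-1) : F) * ((d - j : ℕ) : F) := by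
      exact_mod_cast congrArg (Nat.cast (R := F)) hnat
    simp only [c, hsign, pow_succ]
    have hnatF2 : ((d-1).choose j : F) * (j : F) = ((d-1).choose (j-1) : F) * ((d:F) - (j:F)) := by
      rw [hnatF, Nat.cast_sub hjd]
    field_simp
    ring_nf
    linear_combination ((d:F) - 1) * (-1:F)^(d-1-j) * hnatF + ((d-1).choose (j-1) : F) * (d:F) * (-1:F)^(d-1-j) * (Nat.cast_sub (R := F) hjd) + (-(d:F)) * (-1:F)^(d-1-j) * hnatF2

end Stmt12Aux

namespace Stmt12Aux

lemma key {F : Type*} [Field F] [CharZero F] {n : ℕ} (d : ℕ) (hd : n < 2*d)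
    (S : Finset (Fin n)) (hS : S.card = d) :
    (∏ i ∈ S, (X i : MvPolynomial (Fin n) F)) ∈ Ideal.span ({∑ i : Fin n, X i} ∪
      {q : MvPolynomial (Fin n) F | ∃ i : Fin n, q = X i ^ 2}) := by
  classical
  set J : Ideal (MvPolynomial (Fin n) F) := Ideal.span ({∑ i : Fin n, X i} ∪
      {q : MvPolynomial (Fin n) F | ∃ i : Fin n, q = X i ^ 2}) with hJ
  have hdn : d ≤ n := hS ▸ (Finset.card_le_univ S).trans_eq (by simp)
  have hd1 : 1 ≤ d := by omega
  have he : (∑ i : Fin n, (X i : MvPolynomial (Fin n) F)) ∈ J :=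
    Ideal.subset_span (Or.inl rfl)
  have hsq : ∀ i : Fin n, (X i : MvPolynomial (Fin n) F)^2 ∈ J :=
    fun i => Ideal.subset_span (Or.inr ⟨i, rfl⟩)
  set y : Finset (Fin n) → MvPolynomial (Fin n) F := fun T => ∏ i ∈ T, X i with hy
  set q : MvPolynomial (Fin n) F :=
    ∑ T ∈ (Finset.univ : Finset (Fin n)).powersetCard (d-1), C (c d (T ∩ S).card) * y T with hq
  set A : MvPolynomial (Fin n) F :=
    ∑ T ∈ (Finset.univ : Finset (Fin n)).powersetCard (d-1), ∑ i ∈ T, C (c d (T ∩ S).card) * (X i ^ 2 * y (T.erase i)) with hA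
  -- the B-sum equals y S
  have hB : ∑ T ∈ (Finset.univ : Finset (Fin n)).powersetCard (d-1), ∑ i ∈ Tᶜ, C (c d (T ∩ S).card : F) * y (insert i T) = y S := by
    rw [Finset.sum_sigma']
    rw [Finset.sum_nbij' (i := fun x => (⟨insert x.2 x.1, x.2⟩ :
          (R : Finset (Fin n)) × Fin n))
        (j := fun x => (⟨x.1.erase x.2, x.2⟩ : (T : Finset (Fin n)) × Fin n))
        (t := ((Finset.univ : Finset (Fin n)).powersetCard d).sigma fun R => R)
        (g := fun x => C (c d ((x.1.erase x.2 ∩ S).card) : F) * y x.1)]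
    · -- now a sum over (R, i)
      rw [Finset.sum_sigma]
      have hinner : ∀ R ∈ (Finset.univ : Finset (Fin n)).powersetCard d,
          ∑ i ∈ R, C (c d ((R.erase i ∩ S).card) : F) * y R
            = if R = S then y S else 0 := by
        intro R hR
        rw [Finset.mem_powersetCard] at hR
        rw [← Finset.sum_mul]
        have hsplit : ∑ i ∈ R, (C (c d ((R.erase i ∩ S).card)) : MvPolynomial (Fin n) F)
            = ∑ i ∈ R ∩ S, C (c d ((R.erase i ∩ S).card))
              + ∑ i ∈ R \ S, C (c d ((R.erase i ∩ S).card)) := by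
          rw [Finset.sum_inter_add_sum_sdiff]
        set j := (R ∩ S).card with hj
        have hj1 : 1 ≤ j := by
          have := Finset.card_union_add_card_inter R S
          have h2 : (R ∪ S).card ≤ n := (Finset.card_le_univ _).trans_eq (by simp)
          omega
        have hjd : j ≤ d := by
          rw [← hR.2]; exact Finset.card_le_card Finset.inter_subset_left
        have e1 : ∀ i ∈ R ∩ S, (R.erase i ∩ S).card = j - 1 := by
          intro i hi
          have : R.erase i ∩ S = (R ∩ S).erase i := by
            rw [Finset.erase_inter]
          rw [this, Finset.card_erase_of_mem hi]
        have e2 : ∀ i ∈ R \ S, (R.erase i ∩ S).card = j := by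
          intro i hi
          rw [Finset.mem_sdiff] at hi
          congr 1
          ext a
          simp only [Finset.mem_inter, Finset.mem_erase]
          constructor
          · rintro ⟨⟨-, h⟩, h2⟩; exact ⟨h, h2⟩
          · rintro ⟨h1, h2⟩; exact ⟨⟨fun h => hi.2 (h ▸ h2), h1⟩, h2⟩
        have hcard2 : (R \ S).card = d - j := by
          have := Finset.card_inter_add_card_sdiff R S
          omega
        have c1 : ∑ i ∈ R ∩ S, (C (c d ((R.erase i ∩ S).card)) : MvPolynomial (Fin n) F)
            = j • C (c d (j-1)) := by
          rw [hj, ← Finset.sum_const]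
          exact Finset.sum_congr rfl fun i hi => by rw [e1 i hi]
        have c2 : ∑ i ∈ R \ S, (C (c d ((R.erase i ∩ S).card)) : MvPolynomial (Fin n) F)
            = (d - j) • C (c d j) := by
          rw [← hcard2, ← Finset.sum_const]
          exact Finset.sum_congr rfl fun i hi => by rw [e2 i hi]
        rw [hsplit, c1, c2, nsmul_eq_mul, nsmul_eq_mul,
          ← MvPolynomial.C_eq_coe_nat, ← MvPolynomial.C_eq_coe_nat,
          ← C_mul, ← C_mul, ← C_add, arith d j hj1 hjd]
        have hRS : R = S ↔ j = d := by
          constructor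
          · rintro rfl; rw [hj, Finset.inter_self, hR.2]
          · intro hjd'
            have h1 : R ∩ S = R := Finset.eq_of_subset_of_card_le
              Finset.inter_subset_left (by rw [← hj, hR.2, hjd'])
            have h2 : R ⊆ S := h1 ▸ Finset.inter_subset_right
            exact Finset.eq_of_subset_of_card_le h2 (by rw [hR.2, hS])
        by_cases hcase : R = S
        · rw [if_pos hcase, if_pos (hRS.mp hcase), hcase, C_1, one_mul]
        · rw [if_neg hcase, if_neg (fun h => hcase (hRS.mpr h)), C_0, zero_mul]
      rw [Finset.sum_congr rfl hinner, Finset.sum_ite_eq' _ S (fun _ => y S),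
        if_pos (Finset.mem_powersetCard.mpr ⟨Finset.subset_univ _, hS⟩)]
    · rintro ⟨T, i⟩ hTi
      simp only [Finset.mem_sigma, Finset.mem_powersetCard, Finset.mem_compl] at hTi ⊢
      refine ⟨⟨Finset.subset_univ _, ?_⟩, Finset.mem_insert_self _ _⟩
      rw [Finset.card_insert_of_notMem hTi.2, hTi.1.2]; omega
    · rintro ⟨R, i⟩ hRi
      simp only [Finset.mem_sigma, Finset.mem_powersetCard, Finset.mem_compl] at hRi ⊢
      exact ⟨⟨Finset.subset_univ _, by rw [Finset.card_erase_of_mem hRi.2, hRi.1.2]⟩,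
        Finset.notMem_erase _ _⟩
    · rintro ⟨T, i⟩ hTi
      simp only [Finset.mem_sigma, Finset.mem_powersetCard, Finset.mem_compl] at hTi
      simp [Finset.erase_insert hTi.2]
    · rintro ⟨R, i⟩ hRi
      simp only [Finset.mem_sigma, Finset.mem_powersetCard, Finset.mem_compl] at hRi
      simp [Finset.insert_erase hRi.2]
    · rintro ⟨T, i⟩ hTi
      simp only [Finset.mem_sigma, Finset.mem_powersetCard, Finset.mem_compl] at hTi
      simp [Finset.erase_insert hTi.2]
  -- main identity
  have hmain : (∑ i : Fin n, (X i : MvPolynomial (Fin n) F)) * q = A + y S := by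
    rw [← hB, hq, Finset.mul_sum]
    rw [← Finset.sum_add_distrib]
    refine Finset.sum_congr rfl ?_
    intro T hT
    have hTc : ∀ i ∈ T, (X i : MvPolynomial (Fin n) F) * y T = X i ^ 2 * y (T.erase i) := by
      intro i hi
      rw [hy]
      simp only []
      rw [← Finset.mul_prod_erase T _ hi]
      ring
    have hTc' : ∀ i ∈ Tᶜ, (X i : MvPolynomial (Fin n) F) * y T = y (insert i T) := by
      intro i hi
      rw [hy]
      simp only []
      rw [Finset.prod_insert (Finset.mem_compl.mp hi)]
    calc (∑ i : Fin n, (X i : MvPolynomial (Fin n) F)) * (C (c d (T ∩ S).card) * y T)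
        = C (c d (T ∩ S).card) * ∑ i : Fin n, X i * y T := by
          rw [Finset.sum_mul, Finset.mul_sum]
          exact Finset.sum_congr rfl fun i _ => by ring
      _ = C (c d (T ∩ S).card) * (∑ i ∈ T, X i * y T + ∑ i ∈ Tᶜ, X i * y T) := by
          rw [Finset.sum_add_sum_compl]
      _ = _ := by
          rw [Finset.sum_congr rfl hTc, Finset.sum_congr rfl hTc', mul_add,
            Finset.mul_sum, Finset.mul_sum]
  have hyS : y S = (∑ i : Fin n, (X i : MvPolynomial (Fin n) F)) * q - A := by
    rw [hmain]; ring
  show y S ∈ J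
  rw [hyS]
  refine sub_mem (Ideal.mul_mem_right _ _ he) ?_
  refine Ideal.sum_mem _ fun T hT => Ideal.sum_mem _ fun i hi => ?_
  exact Ideal.mul_mem_left _ _ (Ideal.mul_mem_right _ _ (hsq i))

end Stmt12Aux

/-- the quotient by `I = ⟨y₁+⋯+yₙ, y₁²,…,yₙ²⟩` vanishes in degrees above
`⌊n/2⌋`: every homogeneous polynomial of degree `d > ⌊n/2⌋` lies in `I`. -/
theorem stmt12 (F : Type*) [Field F] [CharZero F] (n d : ℕ) (hd : n / 2 < d)
    (p : MvPolynomial (Fin n) F) (hp : p.IsHomogeneous d) :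
    p ∈ Ideal.span ({∑ i : Fin n, X i} ∪
      {q : MvPolynomial (Fin n) F | ∃ i : Fin n, q = X i ^ 2}) := by
  classical
  have h2d : n < 2*d := by omega
  set J : Ideal (MvPolynomial (Fin n) F) := Ideal.span ({∑ i : Fin n, X i} ∪
      {q : MvPolynomial (Fin n) F | ∃ i : Fin n, q = X i ^ 2}) with hJ
  have hsq : ∀ i : Fin n, (X i : MvPolynomial (Fin n) F)^2 ∈ J :=
    fun i => Ideal.subset_span (Or.inr ⟨i, rfl⟩)
  rw [← p.support_sum_monomial_coeff]
  refine Ideal.sum_mem _ fun m hm => ?_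
  have hdeg : ∑ i ∈ m.support, m i = d := by
    have h := hp (mem_support_iff.mp hm)
    rw [← h]
    simp [Finsupp.weight_apply, Finsupp.sum]
  have hmono : (monomial m (1:F)) ∈ J := by
    by_cases hcase : ∃ i, 2 ≤ m i
    · obtain ⟨i, hi⟩ := hcase
      have hsum : (m - Finsupp.single i 2) + Finsupp.single i 2 = m := by
        ext a
        by_cases ha : a = i
        · subst ha; simp [Finsupp.single_apply]; omega
        · simp [Finsupp.single_apply, Ne.symm ha]
      have : (monomial m (1:F)) = monomial (m - Finsupp.single i 2) 1 * X i ^ 2 := by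
        rw [X_pow_eq_monomial, monomial_mul, one_mul, hsum]
      rw [this]
      exact Ideal.mul_mem_left _ _ (hsq i)
    · push_neg at hcase
      have hone : ∀ i ∈ m.support, m i = 1 := by
        intro i hi
        have := Finsupp.mem_support_iff.mp hi
        have := hcase i
        omega
      have hcard : m.support.card = d := by
        rw [← hdeg, Finset.sum_congr rfl hone, Finset.sum_const, smul_eq_mul, mul_one]
      have : (monomial m (1:F)) = ∏ i ∈ m.support, X i := by
        rw [monomial_eq, C_1, one_mul, Finsupp.prod]
        exact Finset.prod_congr rfl fun i hi => by rw [hone i hi, pow_one]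
      rw [this]
      exact Stmt12Aux.key d h2d m.support hcard
  have : (monomial m (coeff m p)) = C (coeff m p) * monomial m 1 := by
    rw [C_mul_monomial, mul_one]
  rw [this]
  exact Ideal.mul_mem_left _ _ hmono
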